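/- For every topological space X and every natural number n ≥ 1, p_n(X) = c(X), where p_n(X) is the supremum of cardinalities of point-(≤ n)-finite families of nonempty open sets and c(X) is the cellularity (all cardinal functions taken at least ω). -/

import Mathlib

open Cardinal Set

/-- The cellularity of `X`: the supremum of the cardinalities of pairwise
disjoint families of nonempty open sets, taken at least `ℵ₀`. -/
noncomputable def cellularity (X : Type u) [TopologicalSpace X] : Cardinal.{u} :=
  max ℵ₀ (⨆ 𝒰 : {𝒰 : Set (Set X) //
    (∀ U ∈ 𝒰, IsOpen U ∧ U.Nonempty) ∧ 𝒰.PairwiseDisjoint id}, #𝒰.1)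

/-- `B` is a local π-base at `x`: a family of nonempty open sets such that every
open neighbourhood of `x` contains a member of `B`. -/
def IsLocalPiBase {X : Type u} [TopologicalSpace X] (x : X) (B : Set (Set X)) : Prop :=
  (∀ U ∈ B, IsOpen U ∧ U.Nonempty) ∧ ∀ V : Set X, IsOpen V → x ∈ V → ∃ U ∈ B, U ⊆ V

/-- The π-character of `X`: the supremum over `x ∈ X` of the least cardinality
of a local π-base at `x`, taken at least `ℵ₀`. -/
noncomputable def piCharacter (X : Type u) [TopologicalSpace X] : Cardinal.{u} :=
  max ℵ₀ (⨆ x : X, sInf {κ | ∃ B : Set (Set X), IsLocalPiBase x B ∧ #B = κ})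

/-- A space is homogeneous if for all `x, y` some self-homeomorphism maps `x`
to `y`. -/
def Homogeneous (X : Type*) [TopologicalSpace X] : Prop :=
  ∀ x y : X, ∃ h : X ≃ₜ X, h x = y

/-- A family `𝒰` of nonempty open sets is point-(≤ n)-finite if every point
belongs to at most `n` members of `𝒰`. -/
def PointLeNFinite {X : Type u} [TopologicalSpace X] (n : ℕ) (𝒰 : Set (Set X)) : Prop :=
  (∀ U ∈ 𝒰, IsOpen U ∧ U.Nonempty) ∧
  ∀ x : X, #{U : Set X // U ∈ 𝒰 ∧ x ∈ U} ≤ n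

/-- `p_n(X)`: the supremum of cardinalities of point-(≤ n)-finite families of
nonempty open sets, taken at least `ℵ₀`. -/
noncomputable def pNum (n : ℕ) (X : Type u) [TopologicalSpace X] : Cardinal.{u} :=
  max ℵ₀ (⨆ 𝒰 : {𝒰 : Set (Set X) // PointLeNFinite n 𝒰}, #𝒰.1)

section Aux
variable {X : Type u} [TopologicalSpace X]

lemma aleph0_le_cell : ℵ₀ ≤ cellularity X := le_max_left _ _

lemma disj_le_cell {𝒟 : Set (Set X)} (h : (∀ U ∈ 𝒟, IsOpen U ∧ U.Nonempty) ∧ 𝒟.PairwiseDisjoint id) :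
    Cardinal.mk 𝒟 ≤ cellularity X :=
  le_trans (le_ciSup (Cardinal.bddAbove_range _) (⟨𝒟, h⟩ : {𝒰 : Set (Set X) //
    (∀ U ∈ 𝒰, IsOpen U ∧ U.Nonempty) ∧ 𝒰.PairwiseDisjoint id})) (le_max_right _ _)

lemma key : ∀ n : ℕ, ∀ 𝒰 : Set (Set X), PointLeNFinite (n + 1) 𝒰 → #𝒰 ≤ cellularity X := by
  intro n
  induction n with
  | zero =>
    intro 𝒰 ⟨h1, h2⟩
    apply disj_le_cell
    refine ⟨h1, fun U hU V hV hUV => ?_⟩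
    show Disjoint U V
    rw [Set.disjoint_left]
    intro x hxU hxV
    have hle : #{W : Set X // W ∈ 𝒰 ∧ x ∈ W} ≤ 1 := by simpa using h2 x
    have hne : (⟨U, hU, hxU⟩ : {W : Set X // W ∈ 𝒰 ∧ x ∈ W}) ≠ ⟨V, hV, hxV⟩ := by
      simp [hUV]
    have := (Cardinal.two_le_iff.mpr ⟨_, _, hne⟩).trans hle
    norm_num at this
  | succ n ih =>
    intro 𝒰 ⟨h1, h2⟩
    obtain ⟨𝒟, h𝒟, hmax⟩ := zorn_subset {𝒟 : Set (Set X) | 𝒟 ⊆ 𝒰 ∧ 𝒟.PairwiseDisjoint id} (by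
      intro c hc hchain
      refine ⟨⋃₀ c, ⟨?_, ?_⟩, fun s hs => subset_sUnion_of_mem hs⟩
      · exact sUnion_subset fun s hs => (hc hs).1
      · intro a ha b hb hab
        obtain ⟨s, hs, has⟩ := ha
        obtain ⟨t, ht, hbt⟩ := hb
        rcases hchain.total hs ht with hst | hts
        · exact (hc ht).2 (hst has) hbt hab
        · exact (hc hs).2 has (hts hbt) hab)
    obtain ⟨h𝒟U, h𝒟disj⟩ := h𝒟
    have h𝒟cell : #𝒟 ≤ cellularity X := disj_le_cell ⟨fun U hU => h1 U (h𝒟U hU), h𝒟disj⟩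
    have hmeet : ∀ U ∈ 𝒰, U ∉ 𝒟 → ∃ D ∈ 𝒟, U ≠ D ∧ (U ∩ D).Nonempty := by
      intro U hU hUD
      by_contra hcon
      push_neg at hcon
      have hins : insert U 𝒟 ⊆ 𝒟 := by
        refine hmax ⟨insert_subset hU h𝒟U, h𝒟disj.insert fun D hD hUD' => ?_⟩ (subset_insert U 𝒟)
        simpa [Set.disjoint_iff_inter_eq_empty] using hcon D hD hUD'
      exact hUD (hins (mem_insert U 𝒟))
    -- families of sets meeting a fixed D
    set A : Set X → Set (Set X) := fun D => {U | U ∈ 𝒰 ∧ U ≠ D ∧ (U ∩ D).Nonempty} with hA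
    have hAcell : ∀ D ∈ 𝒟, #(A D) ≤ cellularity X := by
      intro D hD
      set 𝒱 : Set (Set X) := (fun U => U ∩ D) '' A D with hV
      -- 𝒱 is point-(≤ n+1)-finite
      have h𝒱 : PointLeNFinite (n + 1) 𝒱 := by
        constructor
        · rintro W ⟨U, ⟨hU𝒰, hUD, hne⟩, rfl⟩
          exact ⟨(h1 U hU𝒰).1.inter (h1 D (h𝒟U hD)).1, hne⟩
        · intro x
          by_cases hxD : x ∈ D
          · -- inject into members of 𝒰 containing x other than D
            have hinj : Function.Injective (fun W : {W : Set X // W ∈ 𝒱 ∧ x ∈ W} =>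
                (⟨W.2.1.choose, W.2.1.choose_spec.1.1, by
                  have := W.2.1.choose_spec.2
                  have hx := W.2.2
                  rw [← this] at hx
                  exact hx.1, W.2.1.choose_spec.1.2.1⟩ :
                  {U : Set X // U ∈ 𝒰 ∧ x ∈ U ∧ U ≠ D})) := by
              rintro ⟨W₁, hW₁⟩ ⟨W₂, hW₂⟩ h
              have h' : hW₁.1.choose = hW₂.1.choose := congrArg Subtype.val h
              have e1 := hW₁.1.choose_spec.2
              have e2 := hW₂.1.choose_spec.2
              apply Subtype.ext
              show W₁ = W₂
              rw [← e1, ← e2, h']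
            have hle := Cardinal.mk_le_of_injective hinj
            refine hle.trans ?_
            -- #{U // U ∈ 𝒰 ∧ x ∈ U ∧ U ≠ D} ≤ n + 1
            set S : Set (Set X) := {U : Set X | U ∈ 𝒰 ∧ x ∈ U} with hS
            set T : Set (Set X) := S \ {D} with hT
            have hDS : D ∈ S := ⟨h𝒟U hD, hxD⟩
            have hsub : {U : Set X | U ∈ 𝒰 ∧ x ∈ U ∧ U ≠ D} ⊆ T := by
              rintro U ⟨a, b, c⟩; exact ⟨⟨a, b⟩, c⟩
            have hins : insert D T ⊆ S := by
              rintro U (rfl | ⟨hU, -⟩)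
              · exact hDS
              · exact hU
            have h3 : #T + 1 ≤ ((n + 1 : ℕ) : Cardinal) + 1 := by
              rw [← Cardinal.mk_insert (by simp [hT] : D ∉ T)]
              refine (Cardinal.mk_le_mk_of_subset hins).trans ?_
              have := h2 x
              rw [show ((n + 1 + 1 : ℕ) : Cardinal) = ((n + 1 : ℕ) : Cardinal) + 1 by push_cast; ring] at this
              exact this
            have h4 := Cardinal.add_one_le_add_one_iff.mp h3
            exact (Cardinal.mk_le_mk_of_subset hsub).trans h4
          · haveI he : IsEmpty {W : Set X // W ∈ 𝒱 ∧ x ∈ W} := by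
              constructor
              rintro ⟨W, ⟨U, hU, rfl⟩, hxW⟩
              exact hxD hxW.2
            rw [Cardinal.mk_eq_zero]
            exact zero_le
      have h𝒱cell : #𝒱 ≤ cellularity X := ih 𝒱 h𝒱
      -- fibers of U ↦ U ∩ D are finite
      set fib : ↥𝒱 → Set (Set X) := fun W => {U | U ∈ A D ∧ U ∩ D = W.1} with hfibdef
      have hfib : ∀ W : ↥𝒱, #(fib W) ≤ ℵ₀ := by
        rintro ⟨W, U₀, hU₀, rfl⟩
        obtain ⟨x, hx⟩ := hU₀.2.2
        have hinj : Function.Injective (fun U : ↥(fib ⟨U₀ ∩ D, U₀, hU₀, rfl⟩) =>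
            (⟨U.1, U.2.1.1, by
              have h' : x ∈ U.1 ∩ D := by rw [U.2.2]; exact hx
              exact h'.1⟩ : {U : Set X // U ∈ 𝒰 ∧ x ∈ U})) := by
          rintro ⟨U₁, h₁⟩ ⟨U₂, h₂⟩ h
          exact Subtype.ext (congrArg Subtype.val h : U₁ = U₂)
        exact (Cardinal.mk_le_of_injective hinj).trans ((h2 x).trans (Cardinal.nat_lt_aleph0 _).le)
      have hAsub : A D ⊆ ⋃ W : ↥𝒱, fib W := by
        intro U hU
        exact Set.mem_iUnion.mpr ⟨⟨U ∩ D, ⟨U, hU, rfl⟩⟩, hU, rfl⟩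
      calc #(A D) ≤ #((⋃ W : ↥𝒱, fib W : Set (Set X))) := Cardinal.mk_le_mk_of_subset hAsub
        _ ≤ #↥𝒱 * ⨆ W : ↥𝒱, #(fib W) := Cardinal.mk_iUnion_le _
        _ ≤ cellularity X * ℵ₀ := mul_le_mul' h𝒱cell (ciSup_le' hfib)
        _ ≤ cellularity X * cellularity X := mul_le_mul' le_rfl aleph0_le_cell
        _ = cellularity X := Cardinal.mul_eq_self aleph0_le_cell
    -- assemble
    have hcover : 𝒰 ⊆ 𝒟 ∪ ⋃ D : ↥𝒟, A D.1 := by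
      intro U hU
      by_cases hUD : U ∈ 𝒟
      · exact Or.inl hUD
      · obtain ⟨D, hD, hne, hmeets⟩ := hmeet U hU hUD
        exact Or.inr (Set.mem_iUnion.mpr ⟨⟨D, hD⟩, hU, hne, hmeets⟩)
    calc #𝒰 ≤ #((𝒟 ∪ ⋃ D : ↥𝒟, A D.1 : Set (Set X))) := Cardinal.mk_le_mk_of_subset hcover
      _ ≤ #𝒟 + #((⋃ D : ↥𝒟, A D.1 : Set (Set X))) := Cardinal.mk_union_le _ _
      _ ≤ cellularity X + #↥𝒟 * ⨆ D : ↥𝒟, #(A D.1) :=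
          add_le_add h𝒟cell (Cardinal.mk_iUnion_le _)
      _ ≤ cellularity X + cellularity X * cellularity X := by
          refine add_le_add le_rfl (mul_le_mul' h𝒟cell (ciSup_le' fun D => hAcell D.1 D.2))
      _ = cellularity X := by
          rw [Cardinal.mul_eq_self aleph0_le_cell, Cardinal.add_eq_self aleph0_le_cell]

end Aux

theorem stmt9 (X : Type u) [TopologicalSpace X] (n : ℕ) (hn : 1 ≤ n) :
    pNum n X = cellularity X := by
  obtain ⟨m, rfl⟩ : ∃ m, n = m + 1 := ⟨n - 1, (Nat.succ_pred_eq_of_pos hn).symm⟩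
  apply le_antisymm
  · apply max_le aleph0_le_cell
    exact ciSup_le' fun 𝒰 => key m 𝒰.1 𝒰.2
  · apply max_le (le_max_left _ _)
    refine le_trans (ciSup_le' fun 𝒟 => ?_) (le_max_right _ _)
    refine le_ciSup (Cardinal.bddAbove_range _) (⟨𝒟.1, 𝒟.2.1, fun x => ?_⟩ :
      {𝒰 : Set (Set X) // PointLeNFinite (m + 1) 𝒰})
    have hsub : {U : Set X | U ∈ 𝒟.1 ∧ x ∈ U}.Subsingleton := by
      rintro U ⟨hU, hxU⟩ V ⟨hV, hxV⟩
      by_contra hne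
      exact Set.disjoint_left.mp (𝒟.2.2 hU hV hne) hxU hxV
    have h1 : #{U : Set X // U ∈ 𝒟.1 ∧ x ∈ U} ≤ 1 :=
      Cardinal.mk_le_one_iff_set_subsingleton.mpr hsub
    exact h1.trans (by exact_mod_cast Nat.one_le_iff_ne_zero.mpr (by simp))
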